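/- (Lyapunov derivative identity for GeoD rotation estimation) Let V be a finite set with symmetric adjacency relation Adj, and let R̃ : V × V → SO(3) be pairwise consistent relative rotation measurements, i.e. R̃(j,i) = R̃(i,j)ᵀ for all adjacent i, j. Let R_i : ℝ → ℝ^{3×3} (i ∈ V) be curves with R_i(t) ∈ SO(3) and θ(R_i(t)ᵀ R_j(t) R̃(i,j)ᵀ) ∈ (0, π/2) for all adjacent i, j and all t, and suppose each R_i satisfies the GeoD rotation dynamics: at every t, R_i has derivative R_i(t) · ( Σ_{j: Adj(i,j)} Log(R_i(t)ᵀ R_j(t) R̃(i,j)ᵀ) ). Define ω_i(t) := Σ_{j: Adj(i,j)} (Log(R_i(t)ᵀ R_j(t) R̃(i,j)ᵀ))^∨ and V(t) := Σ_{i∈V} Σ_{j: Adj(i,j)} (1/2)‖(Log(R_i(t)ᵀ R_j(t) R̃(i,j)ᵀ))^∨‖₂². Then at every t, the function V is differentiable with derivative −2 Σ_{i∈V} ‖ω_i(t)‖₂². -/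

import Mathlib

open Matrix Real RealInnerProductSpace

/-- The vee map, inverse of the hat map on skew-symmetric matrices. -/
def vee (S : Matrix (Fin 3) (Fin 3) ℝ) : EuclideanSpace ℝ (Fin 3) :=
  WithLp.toLp 2 ![S 2 1, S 0 2, S 1 0]

/-- `SO(3)`: real 3×3 matrices `R` with `RᵀR = I` and `det R = 1`. -/
def SO3 (R : Matrix (Fin 3) (Fin 3) ℝ) : Prop :=
  Rᵀ * R = 1 ∧ R.det = 1

/-- The rotation angle `θ(R) = arccos((tr(R) − 1)/2)`. -/
noncomputable def rotAngle (R : Matrix (Fin 3) (Fin 3) ℝ) : ℝ :=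
  Real.arccos ((Matrix.trace R - 1) / 2)

/-- The matrix logarithm `Log(R) = (θ/(2 sin θ))(R − Rᵀ)` for `θ ≠ 0`, and `0` for `θ = 0`. -/
noncomputable def matLog (R : Matrix (Fin 3) (Fin 3) ℝ) : Matrix (Fin 3) (Fin 3) ℝ :=
  if rotAngle R = 0 then 0
  else (rotAngle R / (2 * Real.sin (rotAngle R))) • (R - Rᵀ)

namespace GeoD

def dot (a b : EuclideanSpace ℝ (Fin 3)) : ℝ := a 0 * b 0 + a 1 * b 1 + a 2 * b 2

lemma norm_sq_eq (v : EuclideanSpace ℝ (Fin 3)) : ‖v‖ ^ 2 = dot v v := by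
  rw [EuclideanSpace.norm_eq, Real.sq_sqrt (by positivity)]
  simp [Fin.sum_univ_three, dot, sq]

lemma so3_mulT {Q : Matrix (Fin 3) (Fin 3) ℝ} (h : SO3 Q) : Q * Qᵀ = 1 :=
  mul_eq_one_comm.mp h.1

lemma so3_transpose {Q : Matrix (Fin 3) (Fin 3) ℝ} (h : SO3 Q) : SO3 Qᵀ :=
  ⟨by rw [transpose_transpose]; exact so3_mulT h, by rw [det_transpose]; exact h.2⟩

lemma so3_mul {A B : Matrix (Fin 3) (Fin 3) ℝ} (hA : SO3 A) (hB : SO3 B) : SO3 (A * B) := by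
  constructor
  · rw [transpose_mul, Matrix.mul_assoc, ← Matrix.mul_assoc Aᵀ, hA.1, Matrix.one_mul, hB.1]
  · rw [det_mul, hA.2, hB.2, one_mul]

lemma so3_adj {Q : Matrix (Fin 3) (Fin 3) ℝ} (h : SO3 Q) : Q.adjugate = Qᵀ := by
  have h1 := Matrix.mul_adjugate Q
  rw [h.2, one_smul] at h1
  calc Q.adjugate = (Qᵀ * Q) * Q.adjugate := by rw [h.1, Matrix.one_mul]
    _ = Qᵀ * (Q * Q.adjugate) := by rw [Matrix.mul_assoc]
    _ = Qᵀ := by rw [h1, Matrix.mul_one]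

lemma trace_sq_poly (Q : Matrix (Fin 3) (Fin 3) ℝ) :
    trace (Q * Q) = (trace Q) ^ 2 - 2 * trace Q.adjugate := by
  simp [Matrix.trace_fin_three, Matrix.mul_apply, Matrix.adjugate_fin_three, Fin.sum_univ_three]
  ring

lemma trace_sq {Q : Matrix (Fin 3) (Fin 3) ℝ} (h : SO3 Q) :
    trace (Q * Q) = (trace Q) ^ 2 - 2 * trace Q := by
  rw [trace_sq_poly, so3_adj h, trace_transpose]

lemma norm_vee_sub_sq {Q : Matrix (Fin 3) (Fin 3) ℝ} (h : SO3 Q) :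
    ‖vee (Q - Qᵀ)‖ ^ 2 = (3 - trace Q) * (1 + trace Q) := by
  have hA := trace_sq h
  have hB : trace (Qᵀ * Q) = 3 := by rw [h.1]; simp [Matrix.trace_one]
  rw [norm_sq_eq]
  simp only [Matrix.trace_fin_three, Matrix.mul_apply, Fin.sum_univ_three,
    transpose_apply] at hA hB ⊢
  simp only [dot, vee, Matrix.sub_apply, WithLp.ofLp_toLp, transpose_apply, Matrix.cons_val_zero, Matrix.cons_val_one,
    Matrix.head_cons, Matrix.cons_val_two, Matrix.tail_cons]
  linear_combination hB - hA

-- bounds on c from θ ∈ (0, π/2)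
lemma c_lt_one {Q : Matrix (Fin 3) (Fin 3) ℝ} (hθ : rotAngle Q ∈ Set.Ioo 0 (π/2)) :
    (trace Q - 1) / 2 < 1 := by
  by_contra h
  have : rotAngle Q = 0 := Real.arccos_eq_zero.mpr (by linarith)
  exact (ne_of_gt hθ.1) this

lemma c_gt_neg_one {Q : Matrix (Fin 3) (Fin 3) ℝ} (hθ : rotAngle Q ∈ Set.Ioo 0 (π/2)) :
    -1 < (trace Q - 1) / 2 := by
  by_contra h
  have hp : rotAngle Q = π := Real.arccos_eq_pi.mpr (by linarith)
  have h2 := hθ.2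
  rw [hp] at h2
  linarith [Real.pi_pos]

lemma cos_rotAngle {Q : Matrix (Fin 3) (Fin 3) ℝ} (hθ : rotAngle Q ∈ Set.Ioo 0 (π/2)) :
    Real.cos (rotAngle Q) = (trace Q - 1) / 2 :=
  Real.cos_arccos (c_gt_neg_one hθ).le (c_lt_one hθ).le

lemma sin_rotAngle_pos {Q : Matrix (Fin 3) (Fin 3) ℝ} (hθ : rotAngle Q ∈ Set.Ioo 0 (π/2)) :
    0 < Real.sin (rotAngle Q) :=
  Real.sin_pos_of_pos_of_lt_pi hθ.1 (lt_trans hθ.2 (by linarith [Real.pi_pos]))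

lemma trace_sin_sq {Q : Matrix (Fin 3) (Fin 3) ℝ} (hθ : rotAngle Q ∈ Set.Ioo 0 (π/2)) :
    (3 - trace Q) * (1 + trace Q) = 4 * Real.sin (rotAngle Q) ^ 2 := by
  have h1 := Real.sin_sq_add_cos_sq (rotAngle Q)
  have h2 := cos_rotAngle hθ
  linear_combination (-4) * h1 + 2*(2*Real.cos (rotAngle Q) + Matrix.trace Q - 1) * h2


lemma vee_apply (S : Matrix (Fin 3) (Fin 3) ℝ) :
    vee S 0 = S 2 1 ∧ vee S 1 = S 0 2 ∧ vee S 2 = S 1 0 := by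
  refine ⟨rfl, rfl, rfl⟩

lemma vee_smul (k : ℝ) (S : Matrix (Fin 3) (Fin 3) ℝ) : vee (k • S) = k • vee S := by
  ext x; fin_cases x <;> simp [vee]

lemma vee_sum {α : Type*} (s : Finset α) (F : α → Matrix (Fin 3) (Fin 3) ℝ) :
    vee (∑ j ∈ s, F j) = ∑ j ∈ s, vee (F j) := by
  ext x
  rw [WithLp.ofLp_sum, Finset.sum_apply]
  fin_cases x <;> simp [vee, Matrix.sum_apply]

lemma matLog_eq {Q : Matrix (Fin 3) (Fin 3) ℝ} (hθ : rotAngle Q ∈ Set.Ioo 0 (π/2)) :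
    matLog Q = (rotAngle Q / (2 * Real.sin (rotAngle Q))) • (Q - Qᵀ) := by
  rw [matLog, if_neg (ne_of_gt hθ.1)]

lemma norm_vee_matLog_sq {Q : Matrix (Fin 3) (Fin 3) ℝ} (hQ : SO3 Q)
    (hθ : rotAngle Q ∈ Set.Ioo 0 (π/2)) :
    ‖vee (matLog Q)‖ ^ 2 = rotAngle Q ^ 2 := by
  have hs := sin_rotAngle_pos hθ
  rw [matLog_eq hθ, vee_smul, norm_smul, mul_pow, norm_vee_sub_sq hQ, trace_sin_sq hθ,
    Real.norm_eq_abs, sq_abs]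
  field_simp
  ring_nf

lemma matLog_skew (Q : Matrix (Fin 3) (Fin 3) ℝ) : (matLog Q)ᵀ = -(matLog Q) := by
  rw [matLog]
  split
  · simp
  · rw [transpose_smul, transpose_sub, transpose_transpose, ← smul_neg, neg_sub]

lemma skew_entries {X : Matrix (Fin 3) (Fin 3) ℝ} (hX : Xᵀ = -X) :
    X 0 0 = 0 ∧ X 1 1 = 0 ∧ X 2 2 = 0 ∧ X 1 2 = -X 2 1 ∧ X 2 0 = -X 0 2 ∧ X 0 1 = -X 1 0 := by
  have h : ∀ a b, X b a = -X a b := fun a b => by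
    have := congrFun (congrFun hX a) b
    simpa [transpose_apply] using this
  refine ⟨by linarith [h 0 0], by linarith [h 1 1], by linarith [h 2 2], h 2 1, h 0 2, h 1 0⟩

lemma trace_skew_mul {X Y : Matrix (Fin 3) (Fin 3) ℝ} (hX : Xᵀ = -X) (hY : Yᵀ = -Y) :
    trace (X * Y) = -2 * dot (vee X) (vee Y) := by
  obtain ⟨x1, x2, x3, x4, x5, x6⟩ := skew_entries hX
  obtain ⟨y1, y2, y3, y4, y5, y6⟩ := skew_entries hY
  simp only [Matrix.trace_fin_three, Matrix.mul_apply, Fin.sum_univ_three, dot, vee, WithLp.ofLp_toLp,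
    Matrix.cons_val_zero, Matrix.cons_val_one, Matrix.head_cons, Matrix.cons_val_two,
    Matrix.tail_cons, x1, x2, x3, x4, x5, x6, y1, y2, y3, y4, y5, y6]
  ring

lemma vee_conj {Q S : Matrix (Fin 3) (Fin 3) ℝ} (hQ : SO3 Q) (hS : Sᵀ = -S) (k : Fin 3) :
    vee (Q * S * Qᵀ) k = Q k 0 * vee S 0 + Q k 1 * vee S 1 + Q k 2 * vee S 2 := by
  obtain ⟨s1, s2, s3, s4, s5, s6⟩ := skew_entries hS
  have hadj := so3_adj hQ
  rw [Matrix.adjugate_fin_three] at hadj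
  have hc : ∀ a b : Fin 3, _ = Qᵀ a b := fun a b => congrFun (congrFun hadj a) b
  have hc00 := hc 0 0; have hc01 := hc 0 1; have hc02 := hc 0 2
  have hc10 := hc 1 0; have hc11 := hc 1 1; have hc12 := hc 1 2
  have hc20 := hc 2 0; have hc21 := hc 2 1; have hc22 := hc 2 2
  simp only [Matrix.cons_val_zero, Matrix.cons_val_one, Matrix.head_cons, Matrix.cons_val_two,
    Matrix.tail_cons, Matrix.of_apply, Matrix.cons_val', Matrix.empty_val',
    Matrix.cons_val_fin_one, Matrix.head_fin_const, transpose_apply, Matrix.head_val']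
    at hc00 hc01 hc02 hc10 hc11 hc12 hc20 hc21 hc22
  fin_cases k <;>
    simp only [vee, WithLp.ofLp_toLp, Matrix.mul_apply, Fin.sum_univ_three, transpose_apply,
      Matrix.cons_val_zero, Matrix.cons_val_one, Matrix.head_cons, Matrix.cons_val_two,
      Matrix.tail_cons, s1, s2, s3, s4, s5, s6, Fin.isValue, Fin.zero_eta, Fin.mk_one,
      Fin.reduceFinMk]
  · linear_combination S 2 1 * hc00 + S 0 2 * hc10 + S 1 0 * hc20
  · linear_combination S 2 1 * hc01 + S 0 2 * hc11 + S 1 0 * hc21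
  · linear_combination S 2 1 * hc02 + S 0 2 * hc12 + S 1 0 * hc22

lemma matLog_conj {P : Matrix (Fin 3) (Fin 3) ℝ} (M : Matrix (Fin 3) (Fin 3) ℝ) (hP : SO3 P) :
    matLog (Pᵀ * Mᵀ * P) = -(Pᵀ * matLog M * P) := by
  have htr : trace (Pᵀ * Mᵀ * P) = trace M := by
    rw [trace_mul_comm, ← Matrix.mul_assoc, so3_mulT hP, Matrix.one_mul, trace_transpose]
  have hrot : rotAngle (Pᵀ * Mᵀ * P) = rotAngle M := by rw [rotAngle, rotAngle, htr]
  rw [matLog, matLog, hrot]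
  split
  · simp
  · rw [transpose_mul, transpose_mul, transpose_transpose, transpose_transpose]
    simp only [Matrix.mul_smul, Matrix.smul_mul, Matrix.mul_sub, Matrix.sub_mul, smul_sub,
      Matrix.mul_assoc, neg_sub]

lemma trace_transpose_mul_skew {E S : Matrix (Fin 3) (Fin 3) ℝ} (hS : Sᵀ = -S) :
    trace (Eᵀ * S) = -trace (E * S) := by
  calc trace (Eᵀ * S) = trace ((Eᵀ * S)ᵀ) := (trace_transpose _).symm
    _ = trace (Sᵀ * E) := by rw [transpose_mul, transpose_transpose]
    _ = trace (E * Sᵀ) := trace_mul_comm _ _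
    _ = -trace (E * S) := by rw [hS, Matrix.mul_neg, trace_neg]

lemma trace_matLog_mul {Q S : Matrix (Fin 3) (Fin 3) ℝ} (hθ : rotAngle Q ∈ Set.Ioo 0 (π/2))
    (hS : Sᵀ = -S) :
    trace (matLog Q * S) = (rotAngle Q / Real.sin (rotAngle Q)) * trace (Q * S) := by
  rw [matLog_eq hθ, Matrix.smul_mul, trace_smul, Matrix.sub_mul, trace_sub,
    trace_transpose_mul_skew hS, smul_eq_mul]
  have hsin := (sin_rotAngle_pos hθ).ne'
  field_simp
  ring

lemma D_eq {Q S : Matrix (Fin 3) (Fin 3) ℝ} (hθ : rotAngle Q ∈ Set.Ioo 0 (π/2))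
    (hS : Sᵀ = -S) :
    -(rotAngle Q / (2 * Real.sin (rotAngle Q))) * trace (Q * S)
      = dot (vee (matLog Q)) (vee S) := by
  have h1 := trace_skew_mul (matLog_skew Q) hS
  rw [trace_matLog_mul hθ hS] at h1
  have hsin := (sin_rotAngle_pos hθ).ne'
  field_simp at h1 ⊢
  linarith [h1]

lemma dot_sum_left {α : Type*} (s : Finset α) (f : α → EuclideanSpace ℝ (Fin 3))
    (u : EuclideanSpace ℝ (Fin 3)) :
    dot (∑ j ∈ s, f j) u = ∑ j ∈ s, dot (f j) u := by
  simp only [dot]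
  rw [WithLp.ofLp_sum, Finset.sum_apply, Finset.sum_apply, Finset.sum_apply, Finset.sum_mul, Finset.sum_mul,
    Finset.sum_mul, ← Finset.sum_add_distrib, ← Finset.sum_add_distrib]

lemma sum_swap_adj {V : Type*} [Fintype V] (Adj : V → V → Prop) [DecidableRel Adj]
    (hsym : ∀ i j, Adj i j → Adj j i) (g : V → V → ℝ) :
    ∑ i, ∑ j ∈ Finset.univ.filter (fun j => Adj i j), g i j
      = ∑ i, ∑ j ∈ Finset.univ.filter (fun j => Adj i j), g j i := by
  simp only [Finset.sum_filter]
  rw [Finset.sum_comm]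
  refine Finset.sum_congr rfl fun i _ => Finset.sum_congr rfl fun j _ => ?_
  by_cases h : Adj i j
  · rw [if_pos h, if_pos (hsym i j h)]
  · rw [if_neg h, if_neg (fun h' => h (hsym j i h'))]

lemma vee_neg (S : Matrix (Fin 3) (Fin 3) ℝ) : vee (-S) = -(vee S) := by
  ext x; fin_cases x <;> simp [vee]

lemma vee_sub (S T : Matrix (Fin 3) (Fin 3) ℝ) : vee (S - T) = vee S - vee T := by
  ext x; fin_cases x <;> simp [vee]

lemma dot_sub_right (u a b : EuclideanSpace ℝ (Fin 3)) :
    dot u (a - b) = dot u a - dot u b := by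
  simp only [dot]
  have h : ∀ k : Fin 3, (a - b) k = a k - b k := fun k => rfl
  rw [h 0, h 1, h 2]; ring

lemma hasDerivAt_pair {f g : ℝ → Matrix (Fin 3) (Fin 3) ℝ}
    {Fd Gd C : Matrix (Fin 3) (Fin 3) ℝ} {t : ℝ}
    (hf : ∀ p q, HasDerivAt (fun s => f s p q) (Fd p q) t)
    (hg : ∀ p q, HasDerivAt (fun s => g s p q) (Gd p q) t)
    (hθt : rotAngle ((f t)ᵀ * g t * Cᵀ) ∈ Set.Ioo 0 (π/2)) :
    HasDerivAt (fun s => (1/2 : ℝ) * rotAngle ((f s)ᵀ * g s * Cᵀ) ^ 2)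
      (-(rotAngle ((f t)ᵀ * g t * Cᵀ) / (2 * Real.sin (rotAngle ((f t)ᵀ * g t * Cᵀ)))) *
        trace (Fdᵀ * g t * Cᵀ + (f t)ᵀ * Gd * Cᵀ)) t := by
  have hE : ∀ p q, HasDerivAt (fun s => ((f s)ᵀ * g s * Cᵀ) p q)
      ((Fdᵀ * g t * Cᵀ + (f t)ᵀ * Gd * Cᵀ) p q) t := by
    intro p q
    have base : HasDerivAt (fun s => ∑ b, (∑ a, f s a p * g s a b) * Cᵀ b q)
        (∑ b, (∑ a, (Fd a p * g t a b + f t a p * Gd a b)) * Cᵀ b q) t := by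
      refine HasDerivAt.fun_sum fun b _ => HasDerivAt.mul_const ?_ _
      exact HasDerivAt.fun_sum fun a _ => (hf a p).mul (hg a b)
    have hfun : (fun s => ((f s)ᵀ * g s * Cᵀ) p q)
        = fun s => ∑ b, (∑ a, f s a p * g s a b) * Cᵀ b q := by
      funext s; simp only [Matrix.mul_apply, Matrix.transpose_apply]
    have hval : (Fdᵀ * g t * Cᵀ + (f t)ᵀ * Gd * Cᵀ) p q
        = ∑ b, (∑ a, (Fd a p * g t a b + f t a p * Gd a b)) * Cᵀ b q := by
      simp only [Matrix.add_apply, Matrix.mul_apply, Matrix.transpose_apply, ← add_mul,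
        ← Finset.sum_add_distrib]
    rw [hfun, hval]
    exact base
  have htr : HasDerivAt (fun s => trace ((f s)ᵀ * g s * Cᵀ))
      (trace (Fdᵀ * g t * Cᵀ + (f t)ᵀ * Gd * Cᵀ)) t := by
    have base := HasDerivAt.fun_sum (fun p (_ : p ∈ Finset.univ) => hE p p)
    have hfun : (fun s => trace ((f s)ᵀ * g s * Cᵀ))
        = fun s => ∑ p, ((f s)ᵀ * g s * Cᵀ) p p := by
      funext s; simp [Matrix.trace, Matrix.diag]
    have hval : trace (Fdᵀ * g t * Cᵀ + (f t)ᵀ * Gd * Cᵀ)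
        = ∑ p, (Fdᵀ * g t * Cᵀ + (f t)ᵀ * Gd * Cᵀ) p p := by
      simp [Matrix.trace, Matrix.diag]
    rw [hfun, hval]
    exact base
  set c : ℝ := (trace ((f t)ᵀ * g t * Cᵀ) - 1) / 2 with hcdef
  have hc1 : c < 1 := c_lt_one hθt
  have hc2 : -1 < c := c_gt_neg_one hθt
  have hcd : HasDerivAt (fun s => (trace ((f s)ᵀ * g s * Cᵀ) - 1) / 2)
      (trace (Fdᵀ * g t * Cᵀ + (f t)ᵀ * Gd * Cᵀ) / 2) t := (htr.sub_const 1).div_const 2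
  have harc := (Real.hasDerivAt_arccos (ne_of_gt hc2) (ne_of_lt hc1)).comp t hcd
  have hsq := (harc.pow 2).const_mul (1/2 : ℝ)
  have hfun2 : (fun s => (1/2 : ℝ) * rotAngle ((f s)ᵀ * g s * Cᵀ) ^ 2)
      = fun s => (1/2 : ℝ)
        * ((Real.arccos ∘ fun s => (trace ((f s)ᵀ * g s * Cᵀ) - 1) / 2) s) ^ 2 := by
    funext s; simp [rotAngle, Function.comp]
  rw [hfun2]
  convert hsq using 1
  case e'_4 => rfl
  case e'_5 => rfl
  case e'_8 => rfl
  have hθeq : rotAngle ((f t)ᵀ * g t * Cᵀ) = Real.arccos c := rfl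
  have hsin : Real.sin (rotAngle ((f t)ᵀ * g t * Cᵀ)) = Real.sqrt (1 - c ^ 2) := by
    rw [hθeq]; exact Real.sin_arccos c
  have hspos := sin_rotAngle_pos hθt
  rw [hsin] at hspos ⊢
  have hs0 : Real.sqrt (1 - c ^ 2) ≠ 0 := hspos.ne'
  simp only [Function.comp, hθeq]
  field_simp
  ring

lemma pair_value {N M C Ai Aj : Matrix (Fin 3) (Fin 3) ℝ} (hC : SO3 C)
    (hAi : Aiᵀ = -Ai) (hAj : Ajᵀ = -Aj)
    (hθ1 : rotAngle (Nᵀ * M * Cᵀ) ∈ Set.Ioo 0 (π/2)) :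
    -(rotAngle (Nᵀ * M * Cᵀ) / (2 * Real.sin (rotAngle (Nᵀ * M * Cᵀ)))) *
        trace ((N * Ai)ᵀ * M * Cᵀ + Nᵀ * (M * Aj) * Cᵀ)
      = -(dot (vee (matLog (Mᵀ * N * C))) (vee Aj))
        - dot (vee (matLog (Nᵀ * M * Cᵀ))) (vee Ai) := by
  have hB : (C * Aj * Cᵀ)ᵀ = -(C * Aj * Cᵀ) := by
    rw [transpose_mul, transpose_mul, transpose_transpose, hAj]
    simp [Matrix.mul_neg, Matrix.neg_mul, Matrix.mul_assoc]
  have hS : (C * Aj * Cᵀ - Ai)ᵀ = -(C * Aj * Cᵀ - Ai) := by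
    rw [transpose_sub, hB, hAi]
    abel
  have htrE : trace ((N * Ai)ᵀ * M * Cᵀ + Nᵀ * (M * Aj) * Cᵀ)
      = trace ((Nᵀ * M * Cᵀ) * (C * Aj * Cᵀ - Ai)) := by
    rw [trace_add, Matrix.mul_sub, trace_sub]
    have t1 : trace ((N * Ai)ᵀ * M * Cᵀ) = -trace ((Nᵀ * M * Cᵀ) * Ai) := by
      rw [transpose_mul, hAi]
      simp only [Matrix.neg_mul, trace_neg, neg_inj]
      rw [trace_mul_comm (Nᵀ * M * Cᵀ) Ai]
      simp only [Matrix.mul_assoc]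
    have t2 : trace (Nᵀ * (M * Aj) * Cᵀ) = trace ((Nᵀ * M * Cᵀ) * (C * Aj * Cᵀ)) := by
      congr 1
      simp only [Matrix.mul_assoc]
      rw [← Matrix.mul_assoc Cᵀ C, hC.1, Matrix.one_mul]
    rw [t1, t2]; ring
  rw [htrE, D_eq hθ1 hS, vee_sub, dot_sub_right]
  have hLji : matLog (Mᵀ * N * C) = -(Cᵀ * matLog (Nᵀ * M * Cᵀ) * C) := by
    have hrw : Mᵀ * N * C = Cᵀ * (Nᵀ * M * Cᵀ)ᵀ * C := by
      rw [transpose_mul, transpose_mul, transpose_transpose, transpose_transpose]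
      simp only [Matrix.mul_assoc]
      rw [← Matrix.mul_assoc Cᵀ C, hC.1, Matrix.one_mul]
    rw [hrw, matLog_conj _ hC]
  have hcomp : ∀ k, vee (matLog (Mᵀ * N * C)) k
      = -(C 0 k * vee (matLog (Nᵀ * M * Cᵀ)) 0 + C 1 k * vee (matLog (Nᵀ * M * Cᵀ)) 1
          + C 2 k * vee (matLog (Nᵀ * M * Cᵀ)) 2) := by
    intro k
    rw [hLji, vee_neg]
    have h := vee_conj (so3_transpose hC) (matLog_skew (Nᵀ * M * Cᵀ)) k
    rw [transpose_transpose] at h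
    have hneg : (-(vee (Cᵀ * matLog (Nᵀ * M * Cᵀ) * C))) k
        = -(vee (Cᵀ * matLog (Nᵀ * M * Cᵀ) * C) k) := rfl
    rw [hneg, h]
    simp [Matrix.transpose_apply]
  have hBcomp := vee_conj hC hAj
  simp only [dot, hBcomp 0, hBcomp 1, hBcomp 2, hcomp 0, hcomp 1, hcomp 2]
  ring

end GeoD

open GeoD in
/-- (Lyapunov derivative identity for GeoD rotation estimation.) Under pairwise
consistent measurements and the GeoD rotation dynamics, the Lyapunov function
`V(t) = Σ_i Σ_{j∼i} (1/2)‖(Log(Rᵢ(t)ᵀ Rⱼ(t) R̃(i,j)ᵀ))^∨‖²` is differentiable at every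
`t` with derivative `−2 Σ_i ‖ω_i(t)‖²`, where
`ω_i(t) = Σ_{j∼i} (Log(Rᵢ(t)ᵀ Rⱼ(t) R̃(i,j)ᵀ))^∨`. -/
theorem geoD_lyapunov_derivative {V : Type*} [Fintype V]
    (Adj : V → V → Prop) [DecidableRel Adj] (hsym : ∀ i j, Adj i j → Adj j i)
    (Rtil : V → V → Matrix (Fin 3) (Fin 3) ℝ)
    (hRtilSO : ∀ i j, Adj i j → SO3 (Rtil i j))
    (hpair : ∀ i j, Adj i j → Rtil j i = (Rtil i j)ᵀ)
    (R : V → ℝ → Matrix (Fin 3) (Fin 3) ℝ)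
    (hSO : ∀ i t, SO3 (R i t))
    (hθ : ∀ i j, Adj i j → ∀ t,
      rotAngle ((R i t)ᵀ * R j t * (Rtil i j)ᵀ) ∈ Set.Ioo 0 (π / 2))
    (hdyn : ∀ i t, ∀ p q, HasDerivAt (fun s => R i s p q)
      ((R i t * ∑ j ∈ Finset.univ.filter (fun j => Adj i j),
          matLog ((R i t)ᵀ * R j t * (Rtil i j)ᵀ)) p q) t) :
    ∀ t, HasDerivAt
      (fun s => ∑ i, ∑ j ∈ Finset.univ.filter (fun j => Adj i j),
        (1 / 2 : ℝ) * ‖vee (matLog ((R i s)ᵀ * R j s * (Rtil i j)ᵀ))‖ ^ 2)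
      (-2 * ∑ i, ‖∑ j ∈ Finset.univ.filter (fun j => Adj i j),
        vee (matLog ((R i t)ᵀ * R j t * (Rtil i j)ᵀ))‖ ^ 2) t := by
  intro t
  have hfun : (fun s => ∑ i, ∑ j ∈ Finset.univ.filter (fun j => Adj i j),
        (1 / 2 : ℝ) * ‖vee (matLog ((R i s)ᵀ * R j s * (Rtil i j)ᵀ))‖ ^ 2)
      = (fun s => ∑ i, ∑ j ∈ Finset.univ.filter (fun j => Adj i j),
        (1 / 2 : ℝ) * rotAngle ((R i s)ᵀ * R j s * (Rtil i j)ᵀ) ^ 2) := by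
    funext s
    refine Finset.sum_congr rfl fun i _ => Finset.sum_congr rfl fun j hj => ?_
    have hj' : Adj i j := (Finset.mem_filter.mp hj).2
    rw [norm_vee_matLog_sq
      (so3_mul (so3_mul (so3_transpose (hSO i s)) (hSO j s)) (so3_transpose (hRtilSO i j hj')))
      (hθ i j hj' s)]
  rw [hfun]
  have hderiv : HasDerivAt
      (fun s => ∑ i, ∑ j ∈ Finset.univ.filter (fun j => Adj i j),
        (1 / 2 : ℝ) * rotAngle ((R i s)ᵀ * R j s * (Rtil i j)ᵀ) ^ 2)
      (∑ i, ∑ j ∈ Finset.univ.filter (fun j => Adj i j),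
        -(rotAngle ((R i t)ᵀ * R j t * (Rtil i j)ᵀ)
            / (2 * Real.sin (rotAngle ((R i t)ᵀ * R j t * (Rtil i j)ᵀ)))) *
          Matrix.trace ((R i t * ∑ k ∈ Finset.univ.filter (fun k => Adj i k),
                matLog ((R i t)ᵀ * R k t * (Rtil i k)ᵀ))ᵀ * R j t * (Rtil i j)ᵀ
            + (R i t)ᵀ * (R j t * ∑ k ∈ Finset.univ.filter (fun k => Adj j k),
                matLog ((R j t)ᵀ * R k t * (Rtil j k)ᵀ)) * (Rtil i j)ᵀ)) t := by
    refine HasDerivAt.fun_sum fun i _ => HasDerivAt.fun_sum fun j hj => ?_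
    exact hasDerivAt_pair (hdyn i t) (hdyn j t) (hθ i j (Finset.mem_filter.mp hj).2 t)
  suffices hval : (∑ i, ∑ j ∈ Finset.univ.filter (fun j => Adj i j),
        -(rotAngle ((R i t)ᵀ * R j t * (Rtil i j)ᵀ)
            / (2 * Real.sin (rotAngle ((R i t)ᵀ * R j t * (Rtil i j)ᵀ)))) *
          Matrix.trace ((R i t * ∑ k ∈ Finset.univ.filter (fun k => Adj i k),
                matLog ((R i t)ᵀ * R k t * (Rtil i k)ᵀ))ᵀ * R j t * (Rtil i j)ᵀ
            + (R i t)ᵀ * (R j t * ∑ k ∈ Finset.univ.filter (fun k => Adj j k),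
                matLog ((R j t)ᵀ * R k t * (Rtil j k)ᵀ)) * (Rtil i j)ᵀ))
      = -2 * ∑ i, ‖∑ j ∈ Finset.univ.filter (fun j => Adj i j),
          vee (matLog ((R i t)ᵀ * R j t * (Rtil i j)ᵀ))‖ ^ 2 by
    exact hval ▸ hderiv
  have hAskew : ∀ k : V, (∑ j ∈ Finset.univ.filter (fun j => Adj k j),
      matLog ((R k t)ᵀ * R j t * (Rtil k j)ᵀ))ᵀ
      = -(∑ j ∈ Finset.univ.filter (fun j => Adj k j),
          matLog ((R k t)ᵀ * R j t * (Rtil k j)ᵀ)) := by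
    intro k
    rw [Matrix.transpose_sum, ← Finset.sum_neg_distrib]
    exact Finset.sum_congr rfl fun j _ => matLog_skew _
  have step1 : (∑ i, ∑ j ∈ Finset.univ.filter (fun j => Adj i j),
        -(rotAngle ((R i t)ᵀ * R j t * (Rtil i j)ᵀ)
            / (2 * Real.sin (rotAngle ((R i t)ᵀ * R j t * (Rtil i j)ᵀ)))) *
          Matrix.trace ((R i t * ∑ k ∈ Finset.univ.filter (fun k => Adj i k),
                matLog ((R i t)ᵀ * R k t * (Rtil i k)ᵀ))ᵀ * R j t * (Rtil i j)ᵀ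
            + (R i t)ᵀ * (R j t * ∑ k ∈ Finset.univ.filter (fun k => Adj j k),
                matLog ((R j t)ᵀ * R k t * (Rtil j k)ᵀ)) * (Rtil i j)ᵀ))
      = ∑ i, ∑ j ∈ Finset.univ.filter (fun j => Adj i j),
        (-(dot (vee (matLog ((R j t)ᵀ * R i t * Rtil i j)))
            (vee (∑ k ∈ Finset.univ.filter (fun k => Adj j k),
              matLog ((R j t)ᵀ * R k t * (Rtil j k)ᵀ))))
          - dot (vee (matLog ((R i t)ᵀ * R j t * (Rtil i j)ᵀ)))
            (vee (∑ k ∈ Finset.univ.filter (fun k => Adj i k),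
              matLog ((R i t)ᵀ * R k t * (Rtil i k)ᵀ)))) := by
    refine Finset.sum_congr rfl fun i _ => Finset.sum_congr rfl fun j hj => ?_
    have hj' : Adj i j := (Finset.mem_filter.mp hj).2
    exact pair_value (hRtilSO i j hj') (hAskew i) (hAskew j) (hθ i j hj' t)
  rw [step1]
  have step3 : (∑ i, ∑ j ∈ Finset.univ.filter (fun j => Adj i j),
        dot (vee (matLog ((R j t)ᵀ * R i t * Rtil i j)))
          (vee (∑ k ∈ Finset.univ.filter (fun k => Adj j k),
            matLog ((R j t)ᵀ * R k t * (Rtil j k)ᵀ))))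
      = ∑ i, ∑ j ∈ Finset.univ.filter (fun j => Adj i j),
        dot (vee (matLog ((R i t)ᵀ * R j t * (Rtil i j)ᵀ)))
          (vee (∑ k ∈ Finset.univ.filter (fun k => Adj i k),
            matLog ((R i t)ᵀ * R k t * (Rtil i k)ᵀ))) := by
    rw [sum_swap_adj Adj hsym]
    refine Finset.sum_congr rfl fun i _ => Finset.sum_congr rfl fun j hj => ?_
    rw [hpair i j (Finset.mem_filter.mp hj).2]
  have step2 : ∀ i : V, (∑ j ∈ Finset.univ.filter (fun j => Adj i j),
        dot (vee (matLog ((R i t)ᵀ * R j t * (Rtil i j)ᵀ)))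
          (vee (∑ k ∈ Finset.univ.filter (fun k => Adj i k),
            matLog ((R i t)ᵀ * R k t * (Rtil i k)ᵀ))))
      = ‖∑ j ∈ Finset.univ.filter (fun j => Adj i j),
          vee (matLog ((R i t)ᵀ * R j t * (Rtil i j)ᵀ))‖ ^ 2 := by
    intro i
    rw [← dot_sum_left, norm_sq_eq]
    congr 1
    exact vee_sum _ _
  simp only [sub_eq_add_neg, Finset.sum_add_distrib, Finset.sum_neg_distrib]
  rw [step3]
  have step4 : (∑ i, ∑ j ∈ Finset.univ.filter (fun j => Adj i j),
        dot (vee (matLog ((R i t)ᵀ * R j t * (Rtil i j)ᵀ)))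
          (vee (∑ k ∈ Finset.univ.filter (fun k => Adj i k),
            matLog ((R i t)ᵀ * R k t * (Rtil i k)ᵀ))))
      = ∑ i, ‖∑ j ∈ Finset.univ.filter (fun j => Adj i j),
          vee (matLog ((R i t)ᵀ * R j t * (Rtil i j)ᵀ))‖ ^ 2 :=
    Finset.sum_congr rfl fun i _ => step2 i
  rw [step4]
  ring
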